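/- Let R be a unique factorization domain and let R ⊆ S be a module-finite extension of commutative rings such that S is generated as an R-algebra by a single element. Then the extension R ⊆ S splits, i.e., there exists an R-module homomorphism ρ : S → R with ρ(1) = 1. -/

import Mathlib

open Polynomial

/-- Let `R` be a UFD and `R ⊆ S` a module-finite extension such that `S` is generated
as an `R`-algebra by a single element.  Then `R ⊆ S` splits: there is an `R`-linear
map `ρ : S → R` with `ρ(1) = 1`. -/
theorem stmt14 (R S : Type) [CommRing R] [IsDomain R] [UniqueFactorizationMonoid R]
    [CommRing S] [Algebra R S] (hinj : Function.Injective (algebraMap R S))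
    [Module.Finite R S]
    (hgen : ∃ s : S, Algebra.adjoin R {s} = ⊤) :
    ∃ ρ : S →ₗ[R] R, ρ 1 = 1 := by
  classical
  obtain ⟨s, hs⟩ := hgen
  -- surjectivity of aeval s
  have hsurj : Function.Surjective (aeval s : R[X] →ₐ[R] S) := by
    intro t
    have : t ∈ (aeval s : R[X] →ₐ[R] S).range := by
      rw [← Algebra.adjoin_singleton_eq_range_aeval, hs]; trivial
    exact this
  -- the kernel ideal
  set I : Ideal R[X] := RingHom.ker ((aeval s : R[X] →ₐ[R] S) : R[X] →+* S) with hI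
  -- s is integral
  haveI : Algebra.IsIntegral R S := Algebra.IsIntegral.of_finite R S
  obtain ⟨f, hfm, hfe⟩ := Algebra.IsIntegral.isIntegral (R := R) s
  have hfI : f ∈ I := by
    simpa [hI, RingHom.mem_ker, aeval_def] using hfe
  -- fraction field
  let K := FractionRing R
  have hK : Function.Injective (algebraMap R K) := IsFractionRing.injective R K
  have hmapinj : Function.Injective (Polynomial.map (algebraMap R K)) :=
    Polynomial.map_injective _ hK
  set J : Ideal K[X] := I.map (mapRingHom (algebraMap R K)) with hJ
  set gen : K[X] := Submodule.IsPrincipal.generator J with hgendef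
  have hgenspan : Ideal.span {gen} = J := Submodule.IsPrincipal.span_singleton_generator J
  have hfmemJ : f.map (algebraMap R K) ∈ J :=
    Ideal.mem_map_of_mem _ hfI
  have hgen_dvd_f : gen ∣ f.map (algebraMap R K) := by
    rw [← hgenspan, Ideal.mem_span_singleton] at hfmemJ; exact hfmemJ
  have hgen0 : gen ≠ 0 := by
    intro h
    rw [h, zero_dvd_iff] at hgen_dvd_f
    exact (hfm.map (algebraMap R K)).ne_zero hgen_dvd_f
  -- lift the (normalized) generator to R[X]
  obtain ⟨g, hg⟩ := IsIntegrallyClosed.eq_map_mul_C_of_dvd K hfm hgen_dvd_f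
  have hgmap : g.map (algebraMap R K) = gen * C (leadingCoeff gen)⁻¹ := by
    have : g.map (algebraMap R K) * C (leadingCoeff gen) * C (leadingCoeff gen)⁻¹
        = gen * C (leadingCoeff gen)⁻¹ := by rw [hg]
    rwa [mul_assoc, ← C_mul, mul_inv_cancel₀ (leadingCoeff_ne_zero.mpr hgen0), C_1,
      mul_one] at this
  have hgmap_monic : (g.map (algebraMap R K)).Monic := by
    rw [hgmap]; exact monic_mul_leadingCoeff_inv hgen0
  have hgmonic : g.Monic := by
    have hlc : algebraMap R K g.leadingCoeff = 1 := by
      have := hgmap_monic.leadingCoeff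
      rwa [leadingCoeff_map_of_injective hK] at this
    exact hK (by rwa [map_one])
  -- the generator divides (over R) every element of I
  have hdvd : ∀ p ∈ I, g ∣ p := by
    intro p hp
    have hpJ : p.map (algebraMap R K) ∈ J := Ideal.mem_map_of_mem _ hp
    rw [← hgenspan, Ideal.mem_span_singleton] at hpJ
    have hdvdK : g.map (algebraMap R K) ∣ p.map (algebraMap R K) := by
      exact (dvd_of_mul_left_eq (C gen.leadingCoeff) (by rw [mul_comm]; exact hg)).trans hpJ
    rw [← modByMonic_eq_zero_iff_dvd hgmonic]
    apply hmapinj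
    rw [map_modByMonic _ hgmonic, Polynomial.map_zero,
      modByMonic_eq_zero_iff_dvd hgmap_monic]
    exact hdvdK
  -- Localize S at the image of R⁰ to rule out degree-zero generator
  have hdeg : 0 < g.degree := by
    set M : Submonoid S := Algebra.algebraMapSubmonoid S (nonZeroDivisors R) with hM
    let Sₘ := Localization M
    haveI : Nontrivial Sₘ := by
      refine ⟨0, 1, fun h01 => ?_⟩
      have h1 : algebraMap S Sₘ 1 = 0 := by rw [map_one, ← h01]
      obtain ⟨m, hm⟩ := (IsLocalization.map_eq_zero_iff M Sₘ 1).mp h1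
      obtain ⟨r, hr, hrm⟩ := m.2
      rw [mul_one] at hm
      have : algebraMap R S r = 0 := by rw [hrm]; exact hm
      have : r = 0 := hinj (by simpa using this)
      exact nonZeroDivisors.ne_zero hr this
    have hsub : nonZeroDivisors R ≤ M.comap (algebraMap R S) := by
      intro r hr
      exact Submonoid.mem_comap.mpr ⟨r, hr, rfl⟩
    let kK : K →+* Sₘ := IsLocalization.map Sₘ (algebraMap R S) hsub
    have hkKcomp : kK.comp (algebraMap R K) = (algebraMap S Sₘ).comp (algebraMap R S) :=
      IsLocalization.map_comp hsub
    have hkKinj : Function.Injective kK := kK.injective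
    let s' : Sₘ := algebraMap S Sₘ s
    let χ : K[X] →+* Sₘ := eval₂RingHom kK s'
    have hJker : J ≤ RingHom.ker χ := by
      rw [hJ]
      apply Ideal.map_le_iff_le_comap.mpr
      intro p hp
      have hp0 : aeval s p = 0 := hp
      simp only [Ideal.mem_comap, RingHom.mem_ker, coe_mapRingHom]
      show eval₂ kK s' (p.map (algebraMap R K)) = 0
      rw [eval₂_map, hkKcomp, ← hom_eval₂, ← aeval_def, hp0, map_zero]
    by_contra hcon
    push_neg at hcon
    have hdg : g.degree = gen.degree := by
      rw [← degree_map_eq_of_injective hK g, hgmap, degree_mul_leadingCoeff_inv _ hgen0]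
    rw [hdg] at hcon
    have : gen = C (gen.coeff 0) := eq_C_of_degree_le_zero hcon
    have hgenJ : gen ∈ J := by rw [← hgenspan]; exact Ideal.mem_span_singleton_self _
    have : χ gen = 0 := hJker hgenJ
    rw [eq_C_of_degree_le_zero hcon] at this
    have hc0 : gen.coeff 0 = 0 := hkKinj (by simpa [χ, eval₂_C] using this)
    apply hgen0
    rw [eq_C_of_degree_le_zero hcon, hc0, C_0]
  -- define the splitting
  let φ : R[X] →ₗ[R] R := (lcoeff R 0).comp (modByMonicHom g)
  have hφker : ∀ p ∈ I, φ p = 0 := by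
    intro p hp
    have : p %ₘ g = 0 := (modByMonic_eq_zero_iff_dvd hgmonic).mpr (hdvd p hp)
    simp [φ, modByMonicHom, this]
  have hker : ∀ p q : R[X], aeval s p = aeval s q → φ p = φ q := by
    intro p q h
    have hpq : p - q ∈ I := by
      simp [hI, RingHom.mem_ker, map_sub, h]
    have := hφker _ hpq
    rw [map_sub] at this
    exact sub_eq_zero.mp this
  let pre : S → R[X] := Function.surjInv hsurj
  have hpre : ∀ t, aeval s (pre t) = t := fun t => Function.surjInv_eq hsurj t
  refine ⟨{ toFun := fun t => φ (pre t)
            map_add' := ?_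
            map_smul' := ?_ }, ?_⟩
  · intro a b
    have h1 : aeval s (pre (a + b)) = aeval s (pre a + pre b) := by
      rw [map_add, hpre, hpre, hpre]
    show φ (pre (a + b)) = φ (pre a) + φ (pre b)
    rw [hker _ _ h1, map_add]
  · intro r a
    have h1 : aeval s (pre (r • a)) = aeval s (r • pre a) := by
      rw [map_smul, hpre, hpre]
    show φ (pre (r • a)) = r • φ (pre a)
    rw [hker _ _ h1, map_smul]
  · show φ (pre 1) = 1
    have h1 : aeval s (pre 1) = aeval s 1 := (hpre 1).trans (map_one (aeval s : R[X] →ₐ[R] S)).symm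
    rw [hker _ _ h1]
    have : (1 : R[X]) %ₘ g = 1 := by
      rw [modByMonic_eq_self_iff hgmonic, degree_one]
      exact hdeg
    simp [φ, modByMonicHom, this]
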